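/- Let (H,X) be a conjunctive query. There exists a positive integer ℓ such that the treewidth of the extension graph Γ(H,X) is at most the treewidth of F_ℓ(H,X). In fact any ℓ > |V(H)| + 1 works. -/

import Mathlib

/-- The canonical map `γ` from the vertices of the `ℓ`-copy `F_ℓ(H,X)` to the
vertices of `H`: each `x ∈ X` goes to itself, and each clone `(y,i)` goes to `y`. -/
def gammaMap {V : Type*} (X : Set V) (ℓ : ℕ) :
    (↥X ⊕ (↥(Xᶜ) × Fin ℓ)) → V
  | Sum.inl x => ↑x
  | Sum.inr (y, _) => ↑y

/-- The copy index of a vertex of `F_ℓ(H,X)` (if any). -/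
def copyIdx {V : Type*} (X : Set V) (ℓ : ℕ) :
    (↥X ⊕ (↥(Xᶜ) × Fin ℓ)) → Option (Fin ℓ)
  | Sum.inl _ => none
  | Sum.inr (_, i) => some i

/-- The `ℓ`-copy `F_ℓ(H,X)`: vertex set `X ∪ ((V(H)∖X) × [ℓ])`; two vertices are
adjacent iff their `γ`-images are adjacent in `H` and, when both lie in the cloned
part, their copy indices coincide.  (Edges within `X`, edges `{u,(v,i)}` for all
indices `i`, and edges `{(u,i),(v,i)}` within each copy.) -/
def copyGraph {V : Type*} (H : SimpleGraph V) (X : Set V) (ℓ : ℕ) :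
    SimpleGraph (↥X ⊕ (↥(Xᶜ) × Fin ℓ)) where
  Adj a b := H.Adj (gammaMap X ℓ a) (gammaMap X ℓ b) ∧
    ∀ i j, copyIdx X ℓ a = some i → copyIdx X ℓ b = some j → i = j
  symm := by
    refine ⟨?_⟩
    intro a b h
    exact ⟨h.1.symm, fun i j hi hj => (h.2 j i hj hi).symm⟩
  loopless := by
    refine ⟨?_⟩
    intro a h
    exact H.ne_of_adj h.1 rfl

/-- A tree decomposition of a simple graph `G`. -/
structure TreeDecomp {V : Type*} (G : SimpleGraph V) where
  /-- the index type of the decomposition tree -/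
  ι : Type
  /-- the decomposition tree -/
  T : SimpleGraph ι
  /-- `T` is a tree -/
  tree : T.IsTree
  /-- the bags -/
  bag : ι → Set V
  /-- (T1) every vertex occurs in some bag -/
  covers_vertex : ∀ v : V, ∃ t, v ∈ bag t
  /-- (T3) every edge is contained in some bag -/
  covers_edge : ∀ ⦃u v : V⦄, G.Adj u v → ∃ t, u ∈ bag t ∧ v ∈ bag t
  /-- (T2) for every vertex the set of bags containing it induces a connected subtree -/
  bags_connected : ∀ v : V, (T.induce {t | v ∈ bag t}).Connected

/-- `G` has a tree decomposition of width at most `k`. -/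
def TreewidthAtMost {V : Type*} (G : SimpleGraph V) (k : ℕ) : Prop :=
  ∃ D : TreeDecomp G, ∀ t, (D.bag t).ncard ≤ k + 1

/-- The treewidth of a (finite) simple graph: the least `k` such that `G` has a
tree decomposition of width `k`. -/
noncomputable def treewidth {V : Type*} (G : SimpleGraph V) : ℕ :=
  sInf {k | TreewidthAtMost G k}

/-- The extension `Γ(H,X)` of a conjunctive query `(H,X)`: the graph on `V(H)` whose
edges are those of `H` together with all pairs `{u,v}` of distinct vertices of `X`
such that some connected component of the induced subgraph `H[V(H)∖X]` is adjacent in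
`H` to both `u` and `v`. -/
def extGraph {V : Type*} (H : SimpleGraph V) (X : Set V) : SimpleGraph V where
  Adj u v := H.Adj u v ∨ (u ≠ v ∧ u ∈ X ∧ v ∈ X ∧
    ∃ (w₁ w₂ : ↥(Xᶜ)), H.Adj u ↑w₁ ∧ H.Adj v ↑w₂ ∧ (H.induce Xᶜ).Reachable w₁ w₂)
  symm := by
    refine ⟨?_⟩
    intro u v h
    rcases h with h | ⟨hne, hu, hv, w₁, w₂, h1, h2, h3⟩
    · exact Or.inl h.symm
    · exact Or.inr ⟨hne.symm, hv, hu, w₂, w₁, h2, h1, h3.symm⟩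
  loopless := by
    refine ⟨?_⟩
    intro u h
    rcases h with h | ⟨hne, _⟩
    · exact H.ne_of_adj h rfl
    · exact hne rfl


section Stmt6Aux

open SimpleGraph

variable {V : Type*}

private def induceHomOfSubset {ι : Type*} (T : SimpleGraph ι) {A A' : Set ι} (h : A ⊆ A') :
    T.induce A →g T.induce A' where
  toFun := fun x => ⟨x.1, h x.2⟩
  map_rel' := fun {a b} hadj => hadj

private lemma reachable_induce_mono {ι : Type*} (T : SimpleGraph ι) {A A' : Set ι} (h : A ⊆ A')
    {a b : ↥A} (hr : (T.induce A).Reachable a b) :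
    (T.induce A').Reachable ⟨a.1, h a.2⟩ ⟨b.1, h b.2⟩ :=
  hr.map (induceHomOfSubset T h)

private lemma tdKey {W : Type*} {G : SimpleGraph W} (D : TreeDecomp G) (Bv : Set W)
    {x y : ↥Bv} (p : (G.induce Bv).Walk x y) :
    ∀ (t₁ t₂ : D.ι) (h1 : x.1 ∈ D.bag t₁) (h2 : y.1 ∈ D.bag t₂),
      (D.T.induce {t | ∃ z ∈ Bv, z ∈ D.bag t}).Reachable
        ⟨t₁, x.1, x.2, h1⟩ ⟨t₂, y.1, y.2, h2⟩ := by
  induction p with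
  | nil =>
    rename_i u
    intro t₁ t₂ h1 h2
    have hsub : {t | (u : W) ∈ D.bag t} ⊆ {t | ∃ z ∈ Bv, z ∈ D.bag t} :=
      fun t ht => ⟨u.1, u.2, ht⟩
    exact reachable_induce_mono D.T hsub
      ((D.bags_connected u.1).preconnected ⟨t₁, h1⟩ ⟨t₂, h2⟩)
  | @cons a c b h p ih =>
    intro t₁ t₂ h1 h2
    have hadj : G.Adj a.1 c.1 := h
    obtain ⟨t, hxt, hzt⟩ := D.covers_edge hadj
    have hsub : {s | (a : W) ∈ D.bag s} ⊆ {s | ∃ z ∈ Bv, z ∈ D.bag s} :=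
      fun s hs => ⟨a.1, a.2, hs⟩
    have step1 := reachable_induce_mono D.T hsub
      ((D.bags_connected a.1).preconnected ⟨t₁, h1⟩ ⟨t, hxt⟩)
    exact step1.trans (ih t t₂ hzt h2)

/-- Vertices of `Xᶜ` in a component of `H[Xᶜ]` adjacent to `v`. -/
def RSset (H : SimpleGraph V) (X : Set V) (v : V) : Set ↥(Xᶜ) :=
  {w | ∃ w' : ↥(Xᶜ), H.Adj v ↑w' ∧ (H.induce Xᶜ).Reachable w' w}

/-- The branch set of `v` inside the copy graph. -/
def BSet (H : SimpleGraph V) (X : Set V) {ℓ : ℕ} (idx : V → Fin ℓ) (z₀ : Fin ℓ) (v : V) :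
    Set (↥X ⊕ (↥(Xᶜ) × Fin ℓ)) :=
  {x | (∃ h : v ∈ X, x = Sum.inl ⟨v, h⟩) ∨
       (v ∈ X ∧ ∃ w ∈ RSset H X v, x = Sum.inr (w, idx v)) ∨
       (∃ h : v ∈ Xᶜ, x = Sum.inr (⟨v, h⟩, z₀))}

private lemma copy_adj_inl_inl {H : SimpleGraph V} {X : Set V} {ℓ : ℕ}
    {x y : ↥X} (hadj : H.Adj ↑x ↑y) :
    (copyGraph H X ℓ).Adj (Sum.inl x) (Sum.inl y) :=
  ⟨hadj, fun a _ ha _ => by simp [copyIdx] at ha⟩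

private lemma copy_adj_inl_inr {H : SimpleGraph V} {X : Set V} {ℓ : ℕ}
    {x : ↥X} {y : ↥(Xᶜ)} (i : Fin ℓ) (hadj : H.Adj ↑x ↑y) :
    (copyGraph H X ℓ).Adj (Sum.inl x) (Sum.inr (y, i)) :=
  ⟨hadj, fun a _ ha _ => by simp [copyIdx] at ha⟩

private lemma copy_adj_inr_inr {H : SimpleGraph V} {X : Set V} {ℓ : ℕ}
    {x y : ↥(Xᶜ)} (i : Fin ℓ) (hadj : H.Adj ↑x ↑y) :
    (copyGraph H X ℓ).Adj (Sum.inr (x, i)) (Sum.inr (y, i)) :=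
  ⟨hadj, fun a b ha hb => by
    simp only [copyIdx, Option.some.injEq] at ha hb
    subst ha; subst hb; rfl⟩

private lemma walk_reach {H : SimpleGraph V} {X : Set V} {ℓ : ℕ}
    (idx : V → Fin ℓ) (z₀ : Fin ℓ) {v : V} (hv : v ∈ X) {a b : ↥(Xᶜ)}
    (p : (H.induce Xᶜ).Walk a b) :
    ∀ (_ : a ∈ RSset H X v), b ∈ RSset H X v ∧
      ∀ (pa : Sum.inr (a, idx v) ∈ BSet H X idx z₀ v)
        (pb : Sum.inr (b, idx v) ∈ BSet H X idx z₀ v),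
        ((copyGraph H X ℓ).induce (BSet H X idx z₀ v)).Reachable
          ⟨Sum.inr (a, idx v), pa⟩ ⟨Sum.inr (b, idx v), pb⟩ := by
  induction p with
  | nil => exact fun ha => ⟨ha, fun pa pb => SimpleGraph.Reachable.refl _⟩
  | @cons a c b h p ih =>
    intro ha
    have hc : c ∈ RSset H X v := by
      obtain ⟨w', h1, h2⟩ := ha
      exact ⟨w', h1, h2.trans h.reachable⟩
    obtain ⟨hb, hrec⟩ := ih hc
    refine ⟨hb, fun pa pb => ?_⟩
    have pc : Sum.inr (c, idx v) ∈ BSet H X idx z₀ v := Or.inr (Or.inl ⟨hv, c, hc, rfl⟩)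
    have hadj : H.Adj ↑a ↑c := h
    have e : ((copyGraph H X ℓ).induce (BSet H X idx z₀ v)).Adj
        ⟨Sum.inr (a, idx v), pa⟩ ⟨Sum.inr (c, idx v), pc⟩ := copy_adj_inr_inr _ hadj
    exact e.reachable.trans (hrec pc pb)

private lemma reach_center {H : SimpleGraph V} {X : Set V} {ℓ : ℕ}
    (idx : V → Fin ℓ) (z₀ : Fin ℓ) {v : V} (hv : v ∈ X)
    {x : ↥X ⊕ (↥(Xᶜ) × Fin ℓ)} (hx : x ∈ BSet H X idx z₀ v) :
    ((copyGraph H X ℓ).induce (BSet H X idx z₀ v)).Reachable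
      ⟨Sum.inl ⟨v, hv⟩, Or.inl ⟨hv, rfl⟩⟩ ⟨x, hx⟩ := by
  have hx' := hx
  rcases hx' with ⟨h1, rfl⟩ | ⟨hvX, w, hw, rfl⟩ | ⟨h3, rfl⟩
  · exact SimpleGraph.Reachable.refl _
  · obtain ⟨w', hadj, hreach⟩ := hw
    obtain ⟨p⟩ := hreach
    have ha : w' ∈ RSset H X v := ⟨w', hadj, SimpleGraph.Reachable.refl _⟩
    obtain ⟨hb, hrec⟩ := walk_reach idx z₀ hv p ha
    have pa : Sum.inr (w', idx v) ∈ BSet H X idx z₀ v := Or.inr (Or.inl ⟨hv, w', ha, rfl⟩)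
    have e : ((copyGraph H X ℓ).induce (BSet H X idx z₀ v)).Adj
        ⟨Sum.inl ⟨v, hv⟩, Or.inl ⟨hv, rfl⟩⟩ ⟨Sum.inr (w', idx v), pa⟩ :=
      copy_adj_inl_inr _ hadj
    exact e.reachable.trans (hrec pa hx)
  · exact absurd hv h3

private lemma BSet_reach {H : SimpleGraph V} {X : Set V} {ℓ : ℕ}
    (idx : V → Fin ℓ) (z₀ : Fin ℓ) {v : V} {x y : ↥X ⊕ (↥(Xᶜ) × Fin ℓ)}
    (hx : x ∈ BSet H X idx z₀ v) (hy : y ∈ BSet H X idx z₀ v) :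
    ((copyGraph H X ℓ).induce (BSet H X idx z₀ v)).Reachable ⟨x, hx⟩ ⟨y, hy⟩ := by
  by_cases hv : v ∈ X
  · exact (reach_center idx z₀ hv hx).symm.trans (reach_center idx z₀ hv hy)
  · have hx' := hx
    have hy' := hy
    rcases hx' with ⟨h, _⟩ | ⟨h, _⟩ | ⟨h1, rfl⟩
    · exact absurd h hv
    · exact absurd h hv
    rcases hy' with ⟨h, _⟩ | ⟨h, _⟩ | ⟨h2, rfl⟩
    · exact absurd h hv
    · exact absurd h hv
    exact SimpleGraph.Reachable.refl _

private lemma BSet_nonempty (H : SimpleGraph V) (X : Set V) {ℓ : ℕ}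
    (idx : V → Fin ℓ) (z₀ : Fin ℓ) (v : V) : (BSet H X idx z₀ v).Nonempty := by
  by_cases hv : v ∈ X
  · exact ⟨Sum.inl ⟨v, hv⟩, Or.inl ⟨hv, rfl⟩⟩
  · exact ⟨Sum.inr (⟨v, hv⟩, z₀), Or.inr (Or.inr ⟨hv, rfl⟩)⟩

private lemma BSet_disjoint {H : SimpleGraph V} {X : Set V} {ℓ : ℕ}
    {idx : V → Fin ℓ} {z₀ : Fin ℓ} (hinj : Function.Injective idx) (hz : ∀ u, idx u ≠ z₀)
    {u v : V} {x : ↥X ⊕ (↥(Xᶜ) × Fin ℓ)}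
    (hu : x ∈ BSet H X idx z₀ u) (hv : x ∈ BSet H X idx z₀ v) : u = v := by
  rcases hu with ⟨h1, rfl⟩ | ⟨h1, w, hw, rfl⟩ | ⟨h1, rfl⟩ <;>
    rcases hv with ⟨h2, he⟩ | ⟨h2, w2, hw2, he⟩ | ⟨h2, he⟩
  · simpa using he
  · simp at he
  · simp at he
  · simp at he
  · simp only [Sum.inr.injEq, Prod.mk.injEq] at he
    exact hinj he.2
  · simp only [Sum.inr.injEq, Prod.mk.injEq] at he
    exact absurd he.2 (hz u)
  · simp at he
  · simp only [Sum.inr.injEq, Prod.mk.injEq] at he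
    exact absurd he.2.symm (hz v)
  · simp only [Sum.inr.injEq, Prod.mk.injEq, Subtype.mk.injEq] at he
    exact he.1

private lemma copy_to_ext [Fintype V] (H : SimpleGraph V) (X : Set V) {ℓ : ℕ}
    (idx : V → Fin ℓ) (z₀ : Fin ℓ) (hinj : Function.Injective idx) (hz : ∀ u, idx u ≠ z₀)
    {k : ℕ} (hk : TreewidthAtMost (copyGraph H X ℓ) k) :
    TreewidthAtMost (extGraph H X) k := by
  classical
  obtain ⟨D, hD⟩ := hk
  refine ⟨⟨D.ι, D.T, D.tree, fun t => {v | ∃ x ∈ BSet H X idx z₀ v, x ∈ D.bag t},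
    ?_, ?_, ?_⟩, ?_⟩
  · intro v
    obtain ⟨x, hx⟩ := BSet_nonempty H X idx z₀ v
    obtain ⟨t, ht⟩ := D.covers_vertex x
    exact ⟨t, x, hx, ht⟩
  · intro u v huv
    have key : ∃ x y, x ∈ BSet H X idx z₀ u ∧ y ∈ BSet H X idx z₀ v ∧
        (copyGraph H X ℓ).Adj x y := by
      rcases huv with hH | ⟨hne, hu, hvv, w₁, w₂, h1, h2, h3⟩
      · by_cases hu : u ∈ X <;> by_cases hv : v ∈ X
        · exact ⟨Sum.inl ⟨u, hu⟩, Sum.inl ⟨v, hv⟩, Or.inl ⟨hu, rfl⟩, Or.inl ⟨hv, rfl⟩,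
            copy_adj_inl_inl hH⟩
        · exact ⟨Sum.inl ⟨u, hu⟩, Sum.inr (⟨v, hv⟩, z₀), Or.inl ⟨hu, rfl⟩,
            Or.inr (Or.inr ⟨hv, rfl⟩), copy_adj_inl_inr z₀ hH⟩
        · exact ⟨Sum.inr (⟨u, hu⟩, z₀), Sum.inl ⟨v, hv⟩, Or.inr (Or.inr ⟨hu, rfl⟩),
            Or.inl ⟨hv, rfl⟩, (copy_adj_inl_inr z₀ hH.symm).symm⟩
        · exact ⟨Sum.inr (⟨u, hu⟩, z₀), Sum.inr (⟨v, hv⟩, z₀), Or.inr (Or.inr ⟨hu, rfl⟩),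
            Or.inr (Or.inr ⟨hv, rfl⟩), copy_adj_inr_inr z₀ hH⟩
      · exact ⟨Sum.inr (w₂, idx u), Sum.inl ⟨v, hvv⟩,
          Or.inr (Or.inl ⟨hu, w₂, ⟨w₁, h1, h3⟩, rfl⟩), Or.inl ⟨hvv, rfl⟩,
          (copy_adj_inl_inr (idx u) h2).symm⟩
    obtain ⟨x, y, hxB, hyB, hadj⟩ := key
    obtain ⟨t, hxt, hyt⟩ := D.covers_edge hadj
    exact ⟨t, ⟨x, hxB, hxt⟩, ⟨y, hyB, hyt⟩⟩
  · intro v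
    rw [SimpleGraph.connected_iff]
    constructor
    · rintro ⟨t₁, ht₁⟩ ⟨t₂, ht₂⟩
      have ht₁' := ht₁
      have ht₂' := ht₂
      obtain ⟨x₁, hx₁, hb₁⟩ := ht₁'
      obtain ⟨x₂, hx₂, hb₂⟩ := ht₂'
      obtain ⟨p⟩ := BSet_reach idx z₀ hx₁ hx₂
      exact tdKey D (BSet H X idx z₀ v) p t₁ t₂ hb₁ hb₂
    · obtain ⟨x, hx⟩ := BSet_nonempty H X idx z₀ v
      obtain ⟨t, ht⟩ := D.covers_vertex x
      exact ⟨⟨t, x, hx, ht⟩⟩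
  · intro t
    show ({v | ∃ x ∈ BSet H X idx z₀ v, x ∈ D.bag t}).ncard ≤ k + 1
    rcases Set.eq_empty_or_nonempty {v | ∃ x ∈ BSet H X idx z₀ v, x ∈ D.bag t}
      with hemp | ⟨v₀, hv₀⟩
    · rw [hemp]
      simp
    · obtain ⟨x₀, -, -⟩ := hv₀
      have bound : ({v | ∃ x ∈ BSet H X idx z₀ v, x ∈ D.bag t}).ncard ≤ (D.bag t).ncard := by
        apply Set.ncard_le_ncard_of_injOn
          (fun v => if h : ∃ x ∈ BSet H X idx z₀ v, x ∈ D.bag t then h.choose else x₀)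
        · intro a ha
          have ha' : ∃ x ∈ BSet H X idx z₀ a, x ∈ D.bag t := ha
          simp only [dif_pos ha']
          exact ha'.choose_spec.2
        · intro a ha b hb he
          have ha' : ∃ x ∈ BSet H X idx z₀ a, x ∈ D.bag t := ha
          have hb' : ∃ x ∈ BSet H X idx z₀ b, x ∈ D.bag t := hb
          simp only [dif_pos ha', dif_pos hb'] at he
          exact BSet_disjoint hinj hz ha'.choose_spec.1 (he ▸ hb'.choose_spec.1)
      exact bound.trans (hD t)

private lemma tw_exists {W : Type*} [Finite W] (G : SimpleGraph W) :
    ∃ k, TreewidthAtMost G k := by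
  classical
  refine ⟨Nat.card W, ⟨⟨Unit, ⊥, ⟨?_, SimpleGraph.isAcyclic_bot⟩, fun _ => Set.univ,
    fun v => ⟨(), trivial⟩, fun u v _ => ⟨(), trivial, trivial⟩, fun v => ?_⟩, fun t => ?_⟩⟩
  · rw [SimpleGraph.connected_iff]
    exact ⟨fun a b => by rw [Subsingleton.elim a b], ⟨()⟩⟩
  · rw [SimpleGraph.connected_iff]
    refine ⟨fun a b => by rw [Subsingleton.elim a b], ⟨⟨(), trivial⟩⟩⟩
  · rw [Set.ncard_univ]
    exact Nat.le_succ _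

end Stmt6Aux

/-- There exists a positive integer `ℓ` such that the treewidth of
the extension graph `Γ(H,X)` is at most the treewidth of `F_ℓ(H,X)`; in fact any
`ℓ > |V(H)| + 1` works. -/
theorem stmt6 {V : Type*} [Fintype V] (H : SimpleGraph V) (X : Set V) :
    ∀ ℓ : ℕ, Fintype.card V + 1 < ℓ →
      treewidth (extGraph H X) ≤ treewidth (copyGraph H X ℓ) := by
  intro ℓ hℓ
  classical
  have hcard : Fintype.card (Option V) ≤ Fintype.card (Fin ℓ) := by
    simp only [Fintype.card_option, Fintype.card_fin]
    omega
  obtain ⟨e⟩ := Function.Embedding.nonempty_of_card_le hcard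
  have hinj : Function.Injective (fun v : V => e (some v)) :=
    fun a b h => Option.some_injective _ (e.injective h)
  have hz : ∀ u : V, (fun v : V => e (some v)) u ≠ e none := by
    intro u h
    simpa using e.injective h
  have hne : {k | TreewidthAtMost (copyGraph H X ℓ) k}.Nonempty := tw_exists _
  have hmem := Nat.sInf_mem hne
  exact Nat.sInf_le (copy_to_ext H X _ (e none) hinj hz hmem)
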